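/- Let $W \in \mathbb{R}^{h \times n}$, $G \in \mathbb{R}^{h \times b}$, $X \in \mathbb{R}^{n \times b}$, and $Y \in \mathbb{R}^{b \times b}$ be real matrices, and set $P = X^{\top} Y \in \mathbb{R}^{b \times b}$. Suppose there is a real number $s > 0$ such that $s \, \lVert v \rVert_2 \le \lVert P^{\top} v \rVert_2$ for every vector $v \in \mathbb{R}^{b}$ (i.e., $s$ is a lower bound on the smallest singular value of $P$). Then the Frobenius norms satisfy $\lVert W^{\top} G \rVert_F \le \frac{\lVert W \rVert_F \, \lVert Y \rVert_F}{s} \, \lVert G X^{\top} \rVert_F$. (This is the matrix inequality underlying the paper's Lemma: for a network whose first layer computes $W X$ on a mini-batch $X$ with upstream gradient $G$, the input gradient $\nabla_X \ell = W^{\top} G$ is bounded in Frobenius norm by $k_g$ times the first-layer weight gradient $\nabla_W \ell = G X^{\top}$, where $k_g = \lVert W \rVert_F \lVert Y \rVert_F / s$ and $Y$ plays the role of the pseudo-inverse $(X^{\top})^{+}$.) -/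
import Mathlib

open Matrix

/-- The Frobenius norm of a real matrix. -/
noncomputable def frobeniusNorm {m n : ℕ} (M : Matrix (Fin m) (Fin n) ℝ) : ℝ :=
  Real.sqrt (∑ i, ∑ j, (M i j) ^ 2)

/-- The Euclidean norm of a real vector. -/
noncomputable def euclNorm {m : ℕ} (v : Fin m → ℝ) : ℝ :=
  Real.sqrt (∑ i, (v i) ^ 2)

attribute [local instance] Matrix.frobeniusSeminormedAddCommGroup

lemma frobeniusNorm_eq_norm {m n : ℕ} (M : Matrix (Fin m) (Fin n) ℝ) :
    frobeniusNorm M = ‖M‖ := by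
  rw [Matrix.frobenius_norm_def, frobeniusNorm, Real.sqrt_eq_rpow]
  congr 1
  refine Finset.sum_congr rfl fun i _ => Finset.sum_congr rfl fun j _ => ?_
  rw [Real.norm_eq_abs, Real.rpow_two, sq_abs]

lemma frobeniusNorm_nonneg {m n : ℕ} (M : Matrix (Fin m) (Fin n) ℝ) :
    0 ≤ frobeniusNorm M := Real.sqrt_nonneg _

lemma frobeniusNorm_mul_le {l m n : ℕ} (A : Matrix (Fin l) (Fin m) ℝ)
    (B : Matrix (Fin m) (Fin n) ℝ) :
    frobeniusNorm (A * B) ≤ frobeniusNorm A * frobeniusNorm B := by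
  simp_rw [frobeniusNorm_eq_norm]; exact Matrix.frobenius_norm_mul A B

/-- If `s > 0` is a lower bound on the smallest singular value of
`P = Xᵀ Y` (i.e. `s ‖v‖₂ ≤ ‖Pᵀ v‖₂` for all `v`), then
`‖Wᵀ G‖_F ≤ (‖W‖_F ‖Y‖_F / s) ‖G Xᵀ‖_F`. -/
theorem stmt_0 {h n b : ℕ}
    (W : Matrix (Fin h) (Fin n) ℝ) (G : Matrix (Fin h) (Fin b) ℝ)
    (X : Matrix (Fin n) (Fin b) ℝ) (Y : Matrix (Fin n) (Fin b) ℝ)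
    (P : Matrix (Fin b) (Fin b) ℝ) (hP : P = Xᵀ * Y)
    (s : ℝ) (hs : 0 < s)
    (hsing : ∀ v : Fin b → ℝ, s * euclNorm v ≤ euclNorm (Pᵀ.mulVec v)) :
    frobeniusNorm (Wᵀ * G) ≤
      (frobeniusNorm W * frobeniusNorm Y / s) * frobeniusNorm (G * Xᵀ) := by
  -- Step 1: s * ‖G‖_F ≤ ‖G * P‖_F
  have key : s * frobeniusNorm G ≤ frobeniusNorm (G * P) := by
    have hrow : ∀ i, ((G * P) i) = Pᵀ.mulVec (G i) := by
      intro i; funext j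
      simp [Matrix.mul_apply, Matrix.mulVec, dotProduct, Matrix.transpose_apply,
        mul_comm]
    have hsq : s ^ 2 * (∑ i, ∑ j, (G i j) ^ 2) ≤ ∑ i, ∑ j, ((G * P) i j) ^ 2 := by
      rw [Finset.mul_sum]
      refine Finset.sum_le_sum fun i _ => ?_
      have := hsing (G i)
      have h1 : (s * euclNorm (G i)) ^ 2 ≤ (euclNorm (Pᵀ.mulVec (G i))) ^ 2 :=
        pow_le_pow_left₀ (mul_nonneg hs.le (Real.sqrt_nonneg _)) this 2
      have e1 : (euclNorm (G i)) ^ 2 = ∑ j, (G i j) ^ 2 :=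
        Real.sq_sqrt (Finset.sum_nonneg fun j _ => sq_nonneg _)
      have e2 : (euclNorm (Pᵀ.mulVec (G i))) ^ 2 = ∑ j, ((Pᵀ.mulVec (G i)) j) ^ 2 :=
        Real.sq_sqrt (Finset.sum_nonneg fun j _ => sq_nonneg _)
      calc s ^ 2 * ∑ j, (G i j) ^ 2 = (s * euclNorm (G i)) ^ 2 := by
            rw [mul_pow, e1]
        _ ≤ (euclNorm (Pᵀ.mulVec (G i))) ^ 2 := h1
        _ = ∑ j, ((G * P) i j) ^ 2 := by rw [e2, hrow i]
    have := Real.sqrt_le_sqrt hsq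
    rw [Real.sqrt_mul (sq_nonneg s)] at this
    rwa [Real.sqrt_sq hs.le] at this
  -- Step 2: combine
  have h1 : frobeniusNorm (Wᵀ * G) ≤ frobeniusNorm Wᵀ * frobeniusNorm G :=
    frobeniusNorm_mul_le _ _
  have hT : frobeniusNorm Wᵀ = frobeniusNorm W := by
    simp_rw [frobeniusNorm_eq_norm]; exact Matrix.frobenius_norm_transpose W
  have h2 : frobeniusNorm (G * P) ≤ frobeniusNorm (G * Xᵀ) * frobeniusNorm Y := by
    rw [hP, ← Matrix.mul_assoc]; exact frobeniusNorm_mul_le _ _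
  have hGle : frobeniusNorm G ≤ frobeniusNorm (G * Xᵀ) * frobeniusNorm Y / s := by
    rw [le_div_iff₀ hs]
    calc frobeniusNorm G * s = s * frobeniusNorm G := mul_comm _ _
      _ ≤ frobeniusNorm (G * P) := key
      _ ≤ frobeniusNorm (G * Xᵀ) * frobeniusNorm Y := h2
  calc frobeniusNorm (Wᵀ * G) ≤ frobeniusNorm W * frobeniusNorm G := by rw [← hT]; exact h1
    _ ≤ frobeniusNorm W * (frobeniusNorm (G * Xᵀ) * frobeniusNorm Y / s) :=
        mul_le_mul_of_nonneg_left hGle (frobeniusNorm_nonneg W)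
    _ = (frobeniusNorm W * frobeniusNorm Y / s) * frobeniusNorm (G * Xᵀ) := by ring
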